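/- Let x ∈ ℂⁿ be s-sparse with T = supp(x), let A ∈ ℂ^{m×n} and X ∈ ℂ^{n×n} with ‖(P_T X A*A P_T)⁻¹‖_∞ ≤ 2 (the inverse taken on the range of P_T) and max_{i ∈ T^c} ‖P_T X A*A e_i‖₂ ≤ 1. Then every h ∈ ℂⁿ with A h = 0 satisfies ‖h_T‖₂ ≤ 2‖h_{T^c}‖₁. -/

import Mathlib

open MeasureTheory Matrix Finset ComplexConjugate
open scoped BigOperators Matrix ComplexOrder

noncomputable section

/-- The ℓ₂ (Euclidean) norm of a vector in ℂⁿ. -/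
def l2norm {n : ℕ} (v : Fin n → ℂ) : ℝ := Real.sqrt (∑ i, ‖v i‖ ^ 2)

/-- The ℓ₁ norm of a vector in ℂⁿ. -/
def l1norm {n : ℕ} (v : Fin n → ℂ) : ℝ := ∑ i, ‖v i‖

/-- The ℓ∞ norm (maximal absolute entry) of a vector in ℂⁿ. -/
def linfNorm {n : ℕ} (v : Fin n → ℂ) : ℝ := ⨆ i, ‖v i‖

/-- The sparsity ‖v‖₀ of a vector: the cardinality of its support. -/
def sparsity {n : ℕ} (v : Fin n → ℂ) : ℕ := (Finset.univ.filter fun i => v i ≠ 0).card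

/-- Largest s-sparse eigenvalue λ_max(s, M) = sup over s-sparse v ≠ 0 of ‖Mv‖₂/‖v‖₂. -/
def sparseMax {n : ℕ} (s : ℕ) (M : Matrix (Fin n) (Fin n) ℂ) : ℝ :=
  ⨆ v : {v : Fin n → ℂ // v ≠ 0 ∧ sparsity v ≤ s}, l2norm (M.mulVec v.1) / l2norm v.1

/-- Smallest s-sparse eigenvalue λ_min(s, M). -/
def sparseMin {n : ℕ} (s : ℕ) (M : Matrix (Fin n) (Fin n) ℂ) : ℝ :=
  ⨅ v : {v : Fin n → ℂ // v ≠ 0 ∧ sparsity v ≤ s}, l2norm (M.mulVec v.1) / l2norm v.1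

/-- s-sparse condition number cond(s, M) = λ_max(s,M)/λ_min(s,M). -/
def sparseCond {n : ℕ} (s : ℕ) (M : Matrix (Fin n) (Fin n) ℂ) : ℝ :=
  sparseMax s M / sparseMin s M

/-- Operator norm (largest singular value) of a square matrix. -/
def opNorm {n : ℕ} (M : Matrix (Fin n) (Fin n) ℂ) : ℝ :=
  ⨆ v : {v : Fin n → ℂ // v ≠ 0}, l2norm (M.mulVec v.1) / l2norm v.1

/-- The rank-one matrix a a*. -/
def outer {n : ℕ} (a : Fin n → ℂ) : Matrix (Fin n) (Fin n) ℂ :=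
  Matrix.of fun i j => a i * conj (a j)

/-- The covariance matrix E[a a*] of the distribution F. -/
def covMatrix {n : ℕ} (F : Measure (Fin n → ℂ)) : Matrix (Fin n) (Fin n) ℂ :=
  Matrix.of fun i j => ∫ a, a i * conj (a j) ∂F

/-- The sampling matrix A = (1/√m) Σᵢ eᵢ aᵢ*. -/
def samplingMatrix {m n : ℕ} (a : Fin m → Fin n → ℂ) : Matrix (Fin m) (Fin n) ℂ :=
  Matrix.of fun k j => ((Real.sqrt m : ℂ))⁻¹ * conj (a k j)

/-- Orthogonal projector onto vectors supported on T. -/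
def projT {n : ℕ} (T : Finset (Fin n)) : Matrix (Fin n) (Fin n) ℂ :=
  Matrix.of fun i j => if i = j ∧ i ∈ T then 1 else 0

/-- The sign vector sgn(x): xᵢ/|xᵢ| on supp(x) and 0 elsewhere. -/
def sgnVec {n : ℕ} (x : Fin n → ℂ) : Fin n → ℂ :=
  fun i => if x i = 0 then 0 else x i / (‖x i‖ : ℂ)

/-- t is an almost sure bound for both incoherence quantities
    max_i |⟨a,eᵢ⟩|² and max_i |⟨a, E[aa*]⁻¹ eᵢ⟩|². -/
def IncohBound {n : ℕ} (F : Measure (Fin n → ℂ)) (t : ℝ) : Prop :=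
  ∀ᵐ a ∂F, ∀ i, ‖a i‖ ^ 2 ≤ t ∧ ‖∑ j, conj (a j) * (covMatrix F)⁻¹ j i‖ ^ 2 ≤ t

/-- μ is the incoherence parameter: the smallest almost sure incoherence bound. -/
def IsIncoherenceParam {n : ℕ} (F : Measure (Fin n → ℂ)) (μ : ℝ) : Prop :=
  IsLeast {t | IncohBound F t} μ

/-- x is the unique minimizer of the ℓ₁ norm among solutions of A x̄ = A x. -/
def UniqueL1Min {m n : ℕ} (A : Matrix (Fin m) (Fin n) ℂ) (x : Fin n → ℂ) : Prop :=
  ∀ y : Fin n → ℂ, A.mulVec y = A.mulVec x → y ≠ x → l1norm x < l1norm y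

lemma l2norm_eq_norm {n : ℕ} (v : Fin n → ℂ) :
    l2norm v = ‖(WithLp.equiv 2 (Fin n → ℂ)).symm v‖ := by
  simp [l2norm, EuclideanSpace.norm_eq]

lemma l2norm_nonneg {n : ℕ} (v : Fin n → ℂ) : 0 ≤ l2norm v := Real.sqrt_nonneg _

lemma l1norm_nonneg {n : ℕ} (v : Fin n → ℂ) : 0 ≤ l1norm v :=
  Finset.sum_nonneg fun _ _ => norm_nonneg _

lemma l2norm_pos {n : ℕ} {v : Fin n → ℂ} (hv : v ≠ 0) : 0 < l2norm v := by
  rw [l2norm_eq_norm, norm_pos_iff]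
  intro h
  exact hv (by simpa using congrArg (WithLp.equiv 2 (Fin n → ℂ)) h)

lemma l2norm_neg {n : ℕ} (v : Fin n → ℂ) : l2norm (-v) = l2norm v := by
  simp [l2norm]

lemma l2norm_smul {n : ℕ} (c : ℂ) (v : Fin n → ℂ) : l2norm (c • v) = ‖c‖ * l2norm v := by
  have : (WithLp.equiv 2 (Fin n → ℂ)).symm (c • v)
      = c • (WithLp.equiv 2 (Fin n → ℂ)).symm v := rfl
  rw [l2norm_eq_norm, this, norm_smul, ← l2norm_eq_norm]

lemma l2norm_sum_le {n : ℕ} {ι : Type*} (s : Finset ι) (f : ι → Fin n → ℂ) :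
    l2norm (∑ i ∈ s, f i) ≤ ∑ i ∈ s, l2norm (f i) := by
  have : (WithLp.equiv 2 (Fin n → ℂ)).symm (∑ i ∈ s, f i)
      = ∑ i ∈ s, (WithLp.equiv 2 (Fin n → ℂ)).symm (f i) := WithLp.toLp_sum (p := 2) (s := s) (f := f)
  rw [l2norm_eq_norm, this]
  simpa [l2norm_eq_norm] using norm_sum_le s fun i => (WithLp.equiv 2 (Fin n → ℂ)).symm (f i)

lemma entry_le_l2norm {n : ℕ} (v : Fin n → ℂ) (i : Fin n) : ‖v i‖ ≤ l2norm v := by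
  have h : ‖v i‖ ^ 2 ≤ ∑ j, ‖v j‖ ^ 2 :=
    Finset.single_le_sum (fun j _ => sq_nonneg ‖v j‖) (Finset.mem_univ i)
  calc ‖v i‖ = Real.sqrt (‖v i‖ ^ 2) := (Real.sqrt_sq (norm_nonneg _)).symm
    _ ≤ Real.sqrt (∑ j, ‖v j‖ ^ 2) := Real.sqrt_le_sqrt h
    _ = l2norm v := rfl

lemma mulVec_eq_sum_single {n : ℕ} (M : Matrix (Fin n) (Fin n) ℂ) (v : Fin n → ℂ) :
    M.mulVec v = ∑ i, v i • M.mulVec (Pi.single i 1) := by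
  have hv : v = ∑ i, v i • (Pi.single i 1 : Fin n → ℂ) := by
    ext j
    simp [Pi.single_apply, eq_comm]
  conv_lhs => rw [hv]
  simp only [← Matrix.mulVecLin_apply, map_sum, LinearMap.map_smul]

lemma l2norm_mulVec_le_opNorm {n : ℕ} (M : Matrix (Fin n) (Fin n) ℂ) (v : Fin n → ℂ) :
    l2norm (M.mulVec v) ≤ opNorm M * l2norm v := by
  have hC : ∀ w : Fin n → ℂ, l2norm (M.mulVec w)
      ≤ (∑ i, l2norm (M.mulVec (Pi.single i 1))) * l2norm w := by
    intro w
    calc l2norm (M.mulVec w) = l2norm (∑ i, w i • M.mulVec (Pi.single i 1)) := by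
          rw [mulVec_eq_sum_single]
      _ ≤ ∑ i, l2norm (w i • M.mulVec (Pi.single i 1)) := l2norm_sum_le _ _
      _ ≤ ∑ i, l2norm w * l2norm (M.mulVec (Pi.single i 1)) := by
          refine Finset.sum_le_sum fun i _ => ?_
          rw [l2norm_smul]
          exact mul_le_mul_of_nonneg_right (entry_le_l2norm w i) (l2norm_nonneg _)
      _ = (∑ i, l2norm (M.mulVec (Pi.single i 1))) * l2norm w := by
          rw [← Finset.mul_sum, mul_comm]
  by_cases hv : v = 0
  · simp [hv, Matrix.mulVec_zero, l2norm]
  · have hpos := l2norm_pos hv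
    have hb : BddAbove (Set.range fun u : {u : Fin n → ℂ // u ≠ 0} =>
        l2norm (M.mulVec u.1) / l2norm u.1) := by
      refine ⟨∑ i, l2norm (M.mulVec (Pi.single i 1)), ?_⟩
      rintro r ⟨u, rfl⟩
      exact div_le_of_le_mul₀ (l2norm_nonneg _)
        (Finset.sum_nonneg fun i _ => l2norm_nonneg _)
        (by rw [mul_comm]; exact (hC u.1).trans_eq (by ring))
    have hle : l2norm (M.mulVec v) / l2norm v ≤ opNorm M :=
      le_ciSup hb (⟨v, hv⟩ : {u : Fin n → ℂ // u ≠ 0})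
    exact (div_le_iff₀ hpos).mp hle

lemma projT_mulVec_apply {n : ℕ} (S : Finset (Fin n)) (v : Fin n → ℂ) (i : Fin n) :
    (projT S).mulVec v i = if i ∈ S then v i else 0 := by
  simp only [projT, Matrix.mulVec, dotProduct, Matrix.of_apply]
  by_cases hS : i ∈ S
  · simp [hS, Finset.sum_ite_eq, eq_comm]
  · simp [hS]

/-- Kernel estimate from the proof of inexact duality: under conditions (i) and (ii),
every h in the kernel of A satisfies ‖h_T‖₂ ≤ 2‖h_{T^c}‖₁. -/
theorem statement13 {n m s : ℕ} (x : Fin n → ℂ) (hx : sparsity x ≤ s)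
    (T : Finset (Fin n)) (hT : T = Finset.univ.filter fun i => x i ≠ 0)
    (A : Matrix (Fin m) (Fin n) ℂ)
    (X : Matrix (Fin n) (Fin n) ℂ)
    (B : Matrix (Fin n) (Fin n) ℂ)
    (hB1 : B * (projT T * X * Aᴴ * A * projT T) = projT T)
    (hB2 : (projT T * X * Aᴴ * A * projT T) * B = projT T)
    (hB3 : projT T * B * projT T = B)
    (hBnorm : opNorm B ≤ 2)
    (hoff : ∀ i ∉ T, l2norm ((projT T * (X * Aᴴ * A)).mulVec (Pi.single i 1)) ≤ 1) :
    ∀ h : Fin n → ℂ, A.mulVec h = 0 →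
      l2norm ((projT T).mulVec h) ≤ 2 * l1norm ((projT Tᶜ).mulVec h) := by
  intro h hAh
  set M : Matrix (Fin n) (Fin n) ℂ := projT T * X * Aᴴ * A with hM
  have hPQ : projT T + projT Tᶜ = (1 : Matrix (Fin n) (Fin n) ℂ) := by
    ext i j
    by_cases hij : i = j
    · subst hij
      by_cases hiT : i ∈ T <;> simp [projT, Matrix.one_apply, hiT]
    · simp [projT, Matrix.one_apply, hij]
  have hsplit : h = (projT T).mulVec h + (projT Tᶜ).mulVec h := by
    rw [← Matrix.add_mulVec, hPQ, Matrix.one_mulVec]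
  have hMh : M.mulVec h = 0 := by
    have : M.mulVec h = (projT T * X * Aᴴ).mulVec (A.mulVec h) := by
      rw [Matrix.mulVec_mulVec, hM]
    rw [this, hAh, Matrix.mulVec_zero]
  have h2 : M.mulVec ((projT T).mulVec h) = - M.mulVec ((projT Tᶜ).mulVec h) := by
    have : M.mulVec ((projT T).mulVec h) + M.mulVec ((projT Tᶜ).mulVec h) = 0 := by
      rw [← Matrix.mulVec_add, ← hsplit, hMh]
    linear_combination (norm := module) this
  have key : (projT T).mulVec h = - B.mulVec (M.mulVec ((projT Tᶜ).mulVec h)) := by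
    have h1 : (projT T).mulVec h = B.mulVec (M.mulVec ((projT T).mulVec h)) := by
      conv_lhs => rw [← hB1]
      rw [← Matrix.mulVec_mulVec, ← Matrix.mulVec_mulVec]
    rw [h1, h2, Matrix.mulVec_neg]
  set w : Fin n → ℂ := (projT Tᶜ).mulVec h with hw
  have hwT : ∀ i ∈ T, w i = 0 := by
    intro i hi
    rw [hw, projT_mulVec_apply]
    simp [hi]
  have hMw : l2norm (M.mulVec w) ≤ l1norm w := by
    calc l2norm (M.mulVec w) = l2norm (∑ i, w i • M.mulVec (Pi.single i 1)) := by
          rw [mulVec_eq_sum_single]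
      _ ≤ ∑ i, l2norm (w i • M.mulVec (Pi.single i 1)) := l2norm_sum_le _ _
      _ ≤ ∑ i, ‖w i‖ := by
          refine Finset.sum_le_sum fun i _ => ?_
          rw [l2norm_smul]
          by_cases hi : i ∈ T
          · simp [hwT i hi]
          · have := hoff i hi
            rw [show projT T * (X * Aᴴ * A) = M from by rw [hM]; simp only [Matrix.mul_assoc]] at this
            calc ‖w i‖ * l2norm (M.mulVec (Pi.single i 1)) ≤ ‖w i‖ * 1 :=
                  mul_le_mul_of_nonneg_left this (norm_nonneg _)
              _ = ‖w i‖ := mul_one _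
      _ = l1norm w := rfl
  calc l2norm ((projT T).mulVec h) = l2norm (B.mulVec (M.mulVec w)) := by
        rw [key, l2norm_neg]
    _ ≤ opNorm B * l2norm (M.mulVec w) := l2norm_mulVec_le_opNorm _ _
    _ ≤ 2 * l2norm (M.mulVec w) :=
        mul_le_mul_of_nonneg_right hBnorm (l2norm_nonneg _)
    _ ≤ 2 * l1norm w := by linarith
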